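/- arXiv:2412.06691 — 2 statements merged into one kernel-verified Lean document; each statement's English description precedes it below -/
import Mathlib

section
/- Let α > 0, β ≥ 0, γ > 0 and L > 0 be real numbers, and define H(t) = 1 + 2Lγ/α² − Lβ/α − L t ((γ/α) e^{αt} + γ/α − β)/(e^{αt} − 1) for t > 0. Then H is strictly decreasing on (0, ∞). -/
theorem H_strictAntiOn (α β γ L : ℝ) (hα : 0 < α) (hβ : 0 ≤ β) (hγ : 0 < γ) (hL : 0 < L) :
    StrictAntiOn (fun t : ℝ =>
      1 + 2 * L * γ / α ^ 2 - L * β / α -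
        L * t * ((γ / α) * Real.exp (α * t) + γ / α - β) / (Real.exp (α * t) - 1))
      (Set.Ioi 0) := by
  set A : ℝ := 1 + 2 * L * γ / α ^ 2 - L * β / α with hA
  -- explicit derivative
  have hderiv : ∀ x ∈ Set.Ioi (0:ℝ), HasDerivAt (fun t : ℝ =>
      A - L * t * ((γ / α) * Real.exp (α * t) + γ / α - β) / (Real.exp (α * t) - 1))
      (-(((L * 1 * ((γ / α) * Real.exp (α * x) + γ / α - β) +
          L * x * ((γ / α) * (Real.exp (α * x) * α))) * (Real.exp (α * x) - 1) -
          L * x * ((γ / α) * Real.exp (α * x) + γ / α - β) * (Real.exp (α * x) * α)) /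
          (Real.exp (α * x) - 1) ^ 2)) x := by
    intro x hx
    have hx0 : (0:ℝ) < x := hx
    have hE1 : 1 < Real.exp (α * x) := by
      have : (0:ℝ) < α * x := mul_pos hα hx0
      simpa using Real.one_lt_exp_iff.mpr this
    have hD0 : Real.exp (α * x) - 1 ≠ 0 := by linarith
    have hexp : HasDerivAt (fun t : ℝ => Real.exp (α * t)) (Real.exp (α * x) * α) x := by
      simpa using (((hasDerivAt_id x).const_mul α).exp)
    have hN : HasDerivAt (fun t : ℝ => L * t * ((γ / α) * Real.exp (α * t) + γ / α - β))
        (L * 1 * ((γ / α) * Real.exp (α * x) + γ / α - β) +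
          L * x * ((γ / α) * (Real.exp (α * x) * α))) x :=
      ((hasDerivAt_id x).const_mul L).mul (((hexp.const_mul (γ/α)).add_const (γ/α)).sub_const β)
    have hDend : HasDerivAt (fun t : ℝ => Real.exp (α * t) - 1) (Real.exp (α * x) * α) x :=
      hexp.sub_const 1
    exact (hN.div hDend hD0).const_sub A
  have key : ∀ x ∈ Set.Ioi (0:ℝ),
      (-(((L * 1 * ((γ / α) * Real.exp (α * x) + γ / α - β) +
          L * x * ((γ / α) * (Real.exp (α * x) * α))) * (Real.exp (α * x) - 1) -
          L * x * ((γ / α) * Real.exp (α * x) + γ / α - β) * (Real.exp (α * x) * α)) /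
          (Real.exp (α * x) - 1) ^ 2)) < 0 := by
    intro x hx
    have hx0 : (0:ℝ) < x := hx
    set E := Real.exp (α * x) with hE
    have hE0 : (0:ℝ) < E := Real.exp_pos _
    have hE1 : 1 < E := by
      have hax : (0:ℝ) < α * x := mul_pos hα hx0
      simpa [hE] using Real.one_lt_exp_iff.mpr hax
    have hsinh : α * x < Real.sinh (α * x) := Real.self_lt_sinh_iff.mpr (mul_pos hα hx0)
    have hinv : Real.exp (-(α * x)) = E⁻¹ := by rw [Real.exp_neg]
    rw [Real.sinh_eq, hinv] at hsinh
    have h1 : 0 < E ^ 2 - 1 - 2 * (α * x) * E := by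
      have h := mul_lt_mul_of_pos_right hsinh hE0
      have hEE : E⁻¹ * E = 1 := inv_mul_cancel₀ (ne_of_gt hE0)
      nlinarith [h, hEE]
    have h2 : 0 ≤ (α * x) * E - E + 1 := by
      have h := Real.add_one_le_exp (-(α * x))
      rw [hinv] at h
      have := mul_le_mul_of_nonneg_right h hE0.le
      have hEE : E⁻¹ * E = 1 := inv_mul_cancel₀ (ne_of_gt hE0)
      nlinarith [this, hEE]
    have hnum : 0 < (L * 1 * ((γ / α) * E + γ / α - β) + L * x * ((γ / α) * (E * α))) * (E - 1) -
        L * x * ((γ / α) * E + γ / α - β) * (E * α) := by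
      have hga : 0 < γ / α := div_pos hγ hα
      have hxax : (γ / α) * α = γ := div_mul_cancel₀ γ (ne_of_gt hα)
      nlinarith [mul_pos (mul_pos hL hga) h1, mul_nonneg (mul_nonneg hL.le hβ) h2,
        mul_pos hα hx0]
    have hDsq : (0:ℝ) < (E - 1) ^ 2 := pow_pos (by linarith) 2
    have := div_pos hnum hDsq
    linarith
  have hmain : StrictAntiOn (fun t : ℝ =>
      A - L * t * ((γ / α) * Real.exp (α * t) + γ / α - β) / (Real.exp (α * t) - 1))
      (Set.Ioi 0) := by
    apply StrictAntiOn.mono ?_ (le_refl (Set.Ioi (0:ℝ)))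
    apply strictAntiOn_of_deriv_neg (convex_Ioi 0)
    · exact fun x hx => (hderiv x hx).continuousAt.continuousWithinAt
    · intro x hx
      rw [interior_Ioi] at hx
      rw [(hderiv x hx).deriv]
      exact key x hx
  intro a ha b hb hab
  have := hmain ha hb hab
  simpa [hA, sub_div] using this
end

section
/- Let α > 0, β ≥ 0, γ > 0, L > 0 and define G(t) = 1 − L t e^{αt}((γ/α) e^{αt} + γ/α − β)/(e^{αt} − 1) + (3Lγ/α²) e^{αt} − (2Lβ/α) e^{αt} − Lγ/α² + Lβ/α − (Lγ/α) t e^{αt} for t > 0. Then G is strictly decreasing on (0, ∞). -/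
open Real

lemma phi_pos (x : ℝ) (hx : 0 < x) :
    0 < 2 * x * Real.exp x ^ 2 - Real.exp x ^ 2 - 4 * x * Real.exp x + 4 * Real.exp x - 3 := by
  set φ : ℝ → ℝ := fun x => 2 * x * Real.exp x ^ 2 - Real.exp x ^ 2 - 4 * x * Real.exp x
    + 4 * Real.exp x - 3 with hφ
  have key : StrictMonoOn φ (Set.Ici 0) := by
    apply strictMonoOn_of_deriv_pos (convex_Ici 0)
    · fun_prop
    · intro y hy
      rw [interior_Ici] at hy
      have he := Real.hasDerivAt_exp y
      have hd : HasDerivAt φ (4 * y * Real.exp y * (Real.exp y - 1)) y := by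
        have h1 : HasDerivAt (fun x : ℝ => 2 * x * Real.exp x ^ 2)
            (2 * Real.exp y ^ 2 + 2 * y * (2 * Real.exp y ^ 1 * Real.exp y)) y := by
          exact (((hasDerivAt_id y).const_mul 2).mul (he.pow 2)).congr_deriv (by simp)
        have h2 : HasDerivAt (fun x : ℝ => 4 * x * Real.exp x)
            (4 * Real.exp y + 4 * y * Real.exp y) y := by
          exact (((hasDerivAt_id y).const_mul 4).mul he).congr_deriv (by simp)
        have := (((h1.sub (he.pow 2)).sub h2).add (he.const_mul 4)).sub_const 3
        refine this.congr_deriv ?_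
        ring
      rw [hd.deriv]
      have hy' : (0:ℝ) < y := hy
      have h3 : 1 < Real.exp y := Real.one_lt_exp_iff.2 hy'
      exact mul_pos (by positivity) (by linarith)
  have h0 : φ 0 < φ x := key Set.self_mem_Ici (Set.mem_Ici.mpr hx.le) hx
  simp only [hφ] at h0
  norm_num at h0
  linarith

lemma psi_le (x : ℝ) (hx : 0 < x) :
    Real.exp x - 1 - x ≤ (Real.exp x - 1) ^ 2 := by
  set ψ : ℝ → ℝ := fun x => (Real.exp x - 1) ^ 2 - (Real.exp x - 1 - x) with hψ
  have key : StrictMonoOn ψ (Set.Ici 0) := by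
    apply strictMonoOn_of_deriv_pos (convex_Ici 0)
    · fun_prop
    · intro y hy
      rw [interior_Ici] at hy
      have he := Real.hasDerivAt_exp y
      have hd : HasDerivAt ψ ((Real.exp y - 1) * (2 * Real.exp y - 1)) y := by
        have h1 : HasDerivAt (fun x : ℝ => (Real.exp x - 1) ^ 2)
            (2 * (Real.exp y - 1) ^ 1 * Real.exp y) y := (he.sub_const 1).pow 2
        have h2 : HasDerivAt (fun x : ℝ => Real.exp x - 1 - x)
            (Real.exp y - 1) y := by
          exact ((he.sub_const 1).sub (hasDerivAt_id y)).congr_deriv (by simp)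
        have := h1.sub h2
        refine this.congr_deriv ?_
        ring
      rw [hd.deriv]
      have hy' : (0:ℝ) < y := hy
      have h3 : 1 < Real.exp y := Real.one_lt_exp_iff.2 hy'
      nlinarith
  have h0 : ψ 0 < ψ x := key Set.self_mem_Ici (Set.mem_Ici.mpr hx.le) hx
  simp only [hψ] at h0
  norm_num at h0
  linarith

theorem G_strictAntiOn (α β γ L : ℝ) (hα : 0 < α) (hβ : 0 ≤ β) (hγ : 0 < γ) (hL : 0 < L) :
    StrictAntiOn (fun t : ℝ =>
      1 - L * t * Real.exp (α * t) * ((γ / α) * Real.exp (α * t) + γ / α - β) /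
          (Real.exp (α * t) - 1)
        + (3 * L * γ / α ^ 2) * Real.exp (α * t) - (2 * L * β / α) * Real.exp (α * t)
        - L * γ / α ^ 2 + L * β / α - (L * γ / α) * t * Real.exp (α * t))
      (Set.Ioi 0) := by
  set f : ℝ → ℝ := fun t : ℝ =>
      1 - L * t * Real.exp (α * t) * ((γ / α) * Real.exp (α * t) + γ / α - β) /
          (Real.exp (α * t) - 1)
        + (3 * L * γ / α ^ 2) * Real.exp (α * t) - (2 * L * β / α) * Real.exp (α * t)
        - L * γ / α ^ 2 + L * β / α - (L * γ / α) * t * Real.exp (α * t) with hf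
  set D : ℝ → ℝ := fun t : ℝ =>
      (-(L * γ / α) * Real.exp (α * t) *
          (2 * (α * t) * Real.exp (α * t) ^ 2 - Real.exp (α * t) ^ 2
            - 4 * (α * t) * Real.exp (α * t) + 4 * Real.exp (α * t) - 3)
        - L * β * Real.exp (α * t) *
          (2 * (Real.exp (α * t) - 1) ^ 2 - (Real.exp (α * t) - 1) + α * t)) /
        (Real.exp (α * t) - 1) ^ 2 with hD
  have key : ∀ t ∈ Set.Ioi (0 : ℝ), HasDerivAt f (D t) t := by
    intro t ht
    rw [Set.mem_Ioi] at ht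
    have hQpos : 0 < Real.exp (α * t) - 1 :=
      sub_pos.mpr (Real.one_lt_exp_iff.2 (mul_pos hα ht))
    have hQne : Real.exp (α * t) - 1 ≠ 0 := ne_of_gt hQpos
    have hE : HasDerivAt (fun s : ℝ => Real.exp (α * s)) (Real.exp (α * t) * α) t := by
      simpa using ((hasDerivAt_id t).const_mul α).exp
    have h1 : HasDerivAt (fun s : ℝ => L * s) L t := by
      simpa using (hasDerivAt_id t).const_mul L
    have h2 : HasDerivAt (fun s : ℝ => L * s * Real.exp (α * s))
        (L * Real.exp (α * t) + L * t * (Real.exp (α * t) * α)) t := h1.mul hE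
    have h3 : HasDerivAt (fun s : ℝ => (γ / α) * Real.exp (α * s) + γ / α - β)
        ((γ / α) * (Real.exp (α * t) * α)) t :=
      ((hE.const_mul (γ / α)).add_const (γ / α)).sub_const β
    have h4 := h2.mul h3
    have hden : HasDerivAt (fun s : ℝ => Real.exp (α * s) - 1)
        (Real.exp (α * t) * α) t := hE.sub_const 1
    have hdiv := h4.div hden hQne
    have h5 := hE.const_mul (3 * L * γ / α ^ 2)
    have h6 := hE.const_mul (2 * L * β / α)
    have h7 : HasDerivAt (fun s : ℝ => (L * γ / α) * s * Real.exp (α * s))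
        ((L * γ / α) * Real.exp (α * t) + (L * γ / α) * t * (Real.exp (α * t) * α)) t := by
      have := ((hasDerivAt_id t).const_mul (L * γ / α)).mul hE
      exact this.congr_deriv (by simp)
    have htot := ((((((hasDerivAt_const t (1 : ℝ)).sub hdiv).add h5).sub h6).sub_const
      (L * γ / α ^ 2)).add_const (L * β / α)).sub h7
    refine htot.congr_deriv ?_
    rw [hD]
    simp only [Pi.mul_apply]
    have hαne : α ≠ 0 := ne_of_gt hα
    field_simp
    ring
  apply strictAntiOn_of_deriv_neg (convex_Ioi 0)
  · intro t ht
    exact (key t ht).differentiableAt.continuousAt.continuousWithinAt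
  · intro t ht
    rw [interior_Ioi] at ht
    rw [(key t ht).deriv]
    have ht' : (0 : ℝ) < t := ht
    have hx : 0 < α * t := mul_pos hα ht'
    have hEpos : 0 < Real.exp (α * t) := Real.exp_pos _
    have hQpos : 0 < Real.exp (α * t) - 1 := sub_pos.mpr (Real.one_lt_exp_iff.2 hx)
    have hphi := phi_pos (α * t) hx
    have hpsi := psi_le (α * t) hx
    rw [hD]
    apply div_neg_of_neg_of_pos
    · have hterm1 : 0 < (L * γ / α) * Real.exp (α * t) *
          (2 * (α * t) * Real.exp (α * t) ^ 2 - Real.exp (α * t) ^ 2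
            - 4 * (α * t) * Real.exp (α * t) + 4 * Real.exp (α * t) - 3) := by
        apply mul_pos (mul_pos (by positivity) hEpos) hphi
      have hterm2 : 0 ≤ L * β * Real.exp (α * t) *
          (2 * (Real.exp (α * t) - 1) ^ 2 - (Real.exp (α * t) - 1) + α * t) := by
        apply mul_nonneg (mul_nonneg (mul_nonneg hL.le hβ) hEpos.le)
        nlinarith [sq_nonneg (Real.exp (α * t) - 1)]
      linarith
    · positivity
end
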